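/- With ψ as above, for each countable ordinal α, Γ^α(E([0,1], ψ(A))) = ⋃_{J ∈ C(A^α)} (closure J)² ∪ Δ_{[0,1]}, where A^α is the α-th Cantor–Bendixson derivative of A and C(B) denotes the intervals contiguous to B. Consequently, ψ(A) has CPE if and only if A is countable. -/

import Mathlib

open scoped Classical

/-- The lower density of a set `I ⊆ ℕ`. -/
noncomputable def lowerDensity (I : Set ℕ) : ℝ :=
  Filter.liminf (fun n => (((Finset.range n).filter (fun k => k ∈ I)).card : ℝ) / n)
    Filter.atTop

/-- `I ⊆ ℕ` is an independence set for the pair `(A₁, A₂)`: for every finite `J ⊆ I` and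
every choice `f` of one of the two sets for each index, `⋂_{j ∈ J} T^{-j}(A_{f j}) ≠ ∅`. -/
def IsIndepSet {X : Type*} (T : X → X) (A₁ A₂ : Set X) (I : Set ℕ) : Prop :=
  ∀ J : Finset ℕ, ↑J ⊆ I → ∀ f : ℕ → Bool,
    ∃ x : X, ∀ j ∈ J, T^[j] x ∈ (if f j then A₁ else A₂)

/-- `(x₁, x₂)` is an IE-pair of `(X, T)`: every pair of open neighborhoods admits an
independence set of positive lower density. -/
def IEPair {X : Type*} [TopologicalSpace X] (T : X → X) (p : X × X) : Prop :=
  ∀ A₁ A₂ : Set X, IsOpen A₁ → IsOpen A₂ → p.1 ∈ A₁ → p.2 ∈ A₂ →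
    ∃ I : Set ℕ, IsIndepSet T A₁ A₂ I ∧ 0 < lowerDensity I

/-- The transitive closure `F⁺`. -/
def plusSet {Z : Type*} (F : Set (Z × Z)) : Set (Z × Z) :=
  {p | Relation.TransGen (fun u v => (u, v) ∈ F) p.1 p.2}

/-- `Γ(E) = closure (E⁺ ∪ Δ_X)`. -/
def GammaStep {X : Type*} [TopologicalSpace X] (E : Set (X × X)) : Set (X × X) :=
  closure (plusSet E ∪ Set.diagonal X)

/-- Transfinite iteration of `Γ`. -/
noncomputable def GammaIter {X : Type*} [TopologicalSpace X] (E : Set (X × X)) (o : Ordinal.{0}) :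
    Set (X × X) :=
  Ordinal.limitRecOn o E (fun _ ih => GammaStep ih)
    (fun o _ ih => closure (⋃ b : {b : Ordinal // b < o}, ih b.1 b.2))

/-- The Cantor–Bendixson derivative: the set of accumulation points of `A`. -/
def cbDeriv {X : Type*} [TopologicalSpace X] (A : Set X) : Set X :=
  {x | AccPt x (Filter.principal A)}

/-- The transfinite iterates `A^α` of the Cantor–Bendixson derivative (intersection at limit
stages). -/
noncomputable def CBIter {X : Type*} [TopologicalSpace X] (A : Set X) (o : Ordinal.{0}) :
    Set X :=
  Ordinal.limitRecOn o A (fun _ ih => cbDeriv ih)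
    (fun o _ ih => ⋂ b : {b : Ordinal // b < o}, ih b.1 b.2)

/-- `(a,b)` is an interval contiguous to `A`. -/
def IsContig (A : Set ℝ) (a b : ℝ) : Prop :=
  a < b ∧ Set.Icc a b ⊆ Set.Icc 0 1 ∧ Set.Ioo a b ∩ A = ∅ ∧
    (a ∈ A ∨ a = 0) ∧ (b ∈ A ∨ b = 1)

/-- The unit interval. -/
abbrev unitI : Type := ↥(Set.Icc (0 : ℝ) 1)

/-- The closed subinterval `[a,b]` of the unit interval. -/
def subIcc (a b : ℝ) : Set unitI := {x : unitI | a ≤ (x : ℝ) ∧ (x : ℝ) ≤ b}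

open Set Topology Filter


lemma aux_mem_uIoo {a b t : ℝ} : t ∈ Set.uIoo a b ↔ (a < t ∧ t < b) ∨ (b < t ∧ t < a) := by
  rw [Set.uIoo, Set.mem_Ioo, inf_lt_iff, lt_sup_iff]
  constructor
  · rintro ⟨h1 | h1, h2 | h2⟩
    · exact absurd (h1.trans h2) (lt_irrefl _)
    · exact Or.inl ⟨h1, h2⟩
    · exact Or.inr ⟨h1, h2⟩
    · exact absurd (h1.trans h2) (lt_irrefl _)
  · rintro (⟨h1, h2⟩ | ⟨h1, h2⟩)
    · exact ⟨Or.inl h1, Or.inr h2⟩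
    · exact ⟨Or.inr h1, Or.inl h2⟩

lemma aux_uIoo_split {x y m t : ℝ} (h : t ∈ Set.uIoo x y) (hne : t ≠ m) :
    t ∈ Set.uIoo x m ∨ t ∈ Set.uIoo m y := by
  rw [aux_mem_uIoo] at h ⊢
  rw [show (t ∈ Set.uIoo m y) ↔ _ from aux_mem_uIoo]
  rcases hne.lt_or_gt with hm | hm <;> rcases h with ⟨h1, h2⟩ | ⟨h1, h2⟩ <;> tauto

lemma aux_uIoo_sub_left {x y t : ℝ} (h : t ∈ Set.uIoo x y) : Set.uIoo x t ⊆ Set.uIoo x y := by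
  intro z hz
  rw [aux_mem_uIoo] at h hz ⊢
  rcases h with ⟨h1, h2⟩ | ⟨h1, h2⟩ <;> rcases hz with ⟨g1, g2⟩ | ⟨g1, g2⟩ <;>
    first
      | (left; constructor <;> linarith)
      | (right; constructor <;> linarith)

lemma aux_uIoo_sub_right {x y t : ℝ} (h : t ∈ Set.uIoo x y) : Set.uIoo t y ⊆ Set.uIoo x y := by
  intro z hz
  rw [aux_mem_uIoo] at h hz ⊢
  rcases h with ⟨h1, h2⟩ | ⟨h1, h2⟩ <;> rcases hz with ⟨g1, g2⟩ | ⟨g1, g2⟩ <;>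
    first
      | (left; constructor <;> linarith)
      | (right; constructor <;> linarith)

/-- The key relation: no point of `B` lies strictly between the two coordinates. -/
def myR (B : Set ℝ) : Set (unitI × unitI) :=
  {p | B ∩ Set.uIoo (↑p.1 : ℝ) (↑p.2 : ℝ) = ∅}

lemma mem_myR {B : Set ℝ} {p : unitI × unitI} :
    p ∈ myR B ↔ ∀ t ∈ B, t ∉ Set.uIoo (↑p.1 : ℝ) (↑p.2 : ℝ) := by
  simp [myR, Set.eq_empty_iff_forall_notMem]

lemma aux_myR_closed (B : Set ℝ) : IsClosed (myR B) := by
  have h : myR B = ⋂ t ∈ B, {p : unitI × unitI | t ∉ Set.uIoo (↑p.1 : ℝ) (↑p.2 : ℝ)} := by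
    ext p
    simp [mem_myR, Set.mem_iInter]
  rw [h]
  refine isClosed_biInter fun t _ => ?_
  have h1 : Continuous fun p : unitI × unitI => ((↑p.1 : ℝ) ⊓ (↑p.2 : ℝ)) :=
    (continuous_subtype_val.comp continuous_fst).min (continuous_subtype_val.comp continuous_snd)
  have h2 : Continuous fun p : unitI × unitI => ((↑p.1 : ℝ) ⊔ (↑p.2 : ℝ)) :=
    (continuous_subtype_val.comp continuous_fst).max (continuous_subtype_val.comp continuous_snd)
  have ho : IsOpen {p : unitI × unitI | t ∈ Set.uIoo (↑p.1 : ℝ) (↑p.2 : ℝ)} := by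
    have he : {p : unitI × unitI | t ∈ Set.uIoo (↑p.1 : ℝ) (↑p.2 : ℝ)} =
        {p : unitI × unitI | (↑p.1 : ℝ) ⊓ (↑p.2 : ℝ) < t} ∩
          {p : unitI × unitI | t < (↑p.1 : ℝ) ⊔ (↑p.2 : ℝ)} := by
      ext p; simp [Set.uIoo, Set.mem_Ioo, and_comm]
    rw [he]
    exact (isOpen_lt h1 continuous_const).inter (isOpen_lt continuous_const h2)
  exact isClosed_compl_iff.2 ho

lemma aux_diag_sub (B : Set ℝ) : Set.diagonal unitI ⊆ myR B := by
  rintro ⟨x, y⟩ h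
  have : x = y := h
  subst this
  simp [myR, Set.uIoo_self]

lemma aux_myR_anti {B B' : Set ℝ} (h : B' ⊆ B) : myR B ⊆ myR B' := by
  intro p hp
  rw [mem_myR] at hp ⊢
  exact fun t ht => hp t (h ht)



/-- coordinates of points of `unitI` bound members of `uIoo`. -/
lemma aux_mem_unit {x y : unitI} {t : ℝ} (ht : t ∈ Set.uIoo (↑x : ℝ) (↑y : ℝ)) :
    t ∈ Set.Icc (0 : ℝ) 1 := by
  rw [aux_mem_uIoo] at ht
  have hx1 := x.2.1; have hx2 := x.2.2; have hy1 := y.2.1; have hy2 := y.2.2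
  rcases ht with ⟨h1, h2⟩ | ⟨h1, h2⟩ <;> exact ⟨by linarith, by linarith⟩

lemma aux_plus_sub (B : Set ℝ) :
    plusSet (myR B) ⊆ {p : unitI × unitI | (B ∩ Set.uIoo (↑p.1 : ℝ) (↑p.2 : ℝ)).Finite} := by
  have key : ∀ x y : unitI,
      Relation.TransGen (fun u v : unitI => (u, v) ∈ myR B) x y →
      (B ∩ Set.uIoo (↑x : ℝ) (↑y : ℝ)).Finite := by
    intro x y h
    induction h with
    | single h => rw [show (_ ∩ _ : Set ℝ) = ∅ from h]; exact Set.finite_empty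
    | tail hxb hbc ih =>
      rename_i b c
      have hsub : B ∩ Set.uIoo (↑x : ℝ) (↑c : ℝ) ⊆
          (B ∩ Set.uIoo (↑x : ℝ) (↑b : ℝ)) ∪ ((B ∩ Set.uIoo (↑b : ℝ) (↑c : ℝ)) ∪ {(↑b : ℝ)}) := by
        rintro t ⟨htB, ht⟩
        by_cases hne : t = (↑b : ℝ)
        · exact Or.inr (Or.inr (by simp [hne]))
        · rcases aux_uIoo_split ht hne with h' | h'
          · exact Or.inl ⟨htB, h'⟩
          · exact Or.inr (Or.inl ⟨htB, h'⟩)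
      refine Set.Finite.subset (ih.union (Set.Finite.union ?_ (Set.finite_singleton _))) hsub
      rw [show (_ ∩ _ : Set ℝ) = ∅ from hbc]; exact Set.finite_empty
  intro p hp
  exact key p.1 p.2 hp

lemma aux_plus_sup (B : Set ℝ) :
    {p : unitI × unitI | (B ∩ Set.uIoo (↑p.1 : ℝ) (↑p.2 : ℝ)).Finite} ⊆ plusSet (myR B) := by
  have key : ∀ n : ℕ, ∀ s : Finset ℝ, s.card ≤ n → ∀ x y : unitI,
      B ∩ Set.uIoo (↑x : ℝ) (↑y : ℝ) ⊆ ↑s →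
      Relation.TransGen (fun u v : unitI => (u, v) ∈ myR B) x y := by
    intro n
    induction n with
    | zero =>
      intro s hs x y hsub
      refine Relation.TransGen.single ?_
      have : s = ∅ := Finset.card_eq_zero.1 (Nat.le_zero.1 hs)
      subst this
      simp only [Finset.coe_empty, Set.subset_empty_iff] at hsub
      exact hsub
    | succ n ih =>
      intro s hs x y hsub
      by_cases hB : B ∩ Set.uIoo (↑x : ℝ) (↑y : ℝ) = ∅
      · exact Relation.TransGen.single hB
      · obtain ⟨t, htB, ht⟩ := Set.nonempty_iff_ne_empty.2 hB
        have htmem : t ∈ Set.Icc (0 : ℝ) 1 := aux_mem_unit ht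
        set tu : unitI := ⟨t, htmem⟩ with htu
        have hts : t ∈ s := hsub ⟨htB, ht⟩
        have hcard : (s.erase t).card ≤ n := by
          have := Finset.card_erase_of_mem hts
          omega
        have h1 : Relation.TransGen (fun u v : unitI => (u, v) ∈ myR B) x tu := by
          refine ih (s.erase t) hcard x tu ?_
          rintro z ⟨hzB, hz⟩
          have hzs : z ∈ s := hsub ⟨hzB, aux_uIoo_sub_left ht hz⟩
          have hzt : z ≠ t := by
            rw [aux_mem_uIoo] at hz
            rcases hz with ⟨_, h2⟩ | ⟨h2, _⟩
            · exact ne_of_lt (by simpa using h2)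
            · exact ne_of_gt (by simpa using h2)
          exact Finset.mem_coe.2 (Finset.mem_erase.2 ⟨hzt, hzs⟩)
        have h2 : Relation.TransGen (fun u v : unitI => (u, v) ∈ myR B) tu y := by
          refine ih (s.erase t) hcard tu y ?_
          rintro z ⟨hzB, hz⟩
          have hzs : z ∈ s := hsub ⟨hzB, aux_uIoo_sub_right ht hz⟩
          have hzt : z ≠ t := by
            rw [aux_mem_uIoo] at hz
            rcases hz with ⟨h2, _⟩ | ⟨_, h2⟩
            · exact ne_of_gt (by simpa using h2)
            · exact ne_of_lt (by simpa using h2)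
          exact Finset.mem_coe.2 (Finset.mem_erase.2 ⟨hzt, hzs⟩)
        exact h1.trans h2
  intro p hp
  obtain ⟨s, hs⟩ : ∃ s : Finset ℝ, B ∩ Set.uIoo (↑p.1 : ℝ) (↑p.2 : ℝ) ⊆ ↑s :=
    ⟨hp.toFinset, by simp⟩
  exact key s.card s le_rfl p.1 p.2 hs

lemma aux_plus_eq (B : Set ℝ) :
    plusSet (myR B) = {p : unitI × unitI | (B ∩ Set.uIoo (↑p.1 : ℝ) (↑p.2 : ℝ)).Finite} :=
  le_antisymm (aux_plus_sub B) (aux_plus_sup B)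

lemma aux_cbDeriv_sub_closure {X : Type*} [TopologicalSpace X] (S : Set X) :
    cbDeriv S ⊆ closure S := fun x hx =>
  mem_closure_iff_clusterPt.2 (AccPt.clusterPt hx)

lemma aux_cbDeriv_subset {X : Type*} [TopologicalSpace X] {S : Set X} (hS : IsClosed S) :
    cbDeriv S ⊆ S := by
  intro x hx
  have h := aux_cbDeriv_sub_closure S hx
  rwa [hS.closure_eq] at h

lemma aux_isClosed_cbDeriv {X : Type*} [TopologicalSpace X] [T1Space X] (S : Set X) :
    IsClosed (cbDeriv S) := by
  rw [← isOpen_compl_iff, isOpen_iff_mem_nhds]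
  intro x hx
  rw [Set.mem_compl_iff, cbDeriv, Set.mem_setOf_eq, accPt_iff_nhds] at hx
  push_neg at hx
  obtain ⟨U, hU, hU2⟩ := hx
  obtain ⟨V, hVU, hVopen, hxV⟩ := mem_nhds_iff.1 hU
  refine Filter.mem_of_superset (hVopen.mem_nhds hxV) ?_
  intro y hyV
  simp only [Set.mem_compl_iff, cbDeriv, Set.mem_setOf_eq, accPt_iff_nhds]
  push_neg
  by_cases hyx : y = x
  · subst hyx
    exact ⟨U, hU, hU2⟩
  · refine ⟨V \ {x}, (hVopen.sdiff isClosed_singleton).mem_nhds ⟨hyV, hyx⟩, ?_⟩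
    intro z hz
    exact (hz.1.2 (hU2 z ⟨hVU hz.1.1, hz.2⟩)).elim

lemma aux_cb_finite {X : Type*} [TopologicalSpace X] [T1Space X] {S : Set X} (hS : S.Finite) :
    cbDeriv S = ∅ := by
  ext x
  simp only [cbDeriv, Set.mem_setOf_eq, Set.mem_empty_iff_false, iff_false, accPt_iff_nhds]
  push_neg
  refine ⟨(S \ {x})ᶜ, ?_, ?_⟩
  · exact ((hS.subset Set.diff_subset).isClosed.isOpen_compl).mem_nhds (by simp)
  · rintro y ⟨hy1, hy2⟩
    by_contra hne
    exact hy1 ⟨hy2, hne⟩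

lemma aux_cb_empty_of_finite_inter {B : Set ℝ} {u v : ℝ} (h : (B ∩ Set.Ioo u v).Finite) :
    cbDeriv B ∩ Set.Ioo u v = ∅ := by
  ext t
  simp only [Set.mem_inter_iff, Set.mem_empty_iff_false, iff_false, not_and]
  intro ht htuv
  rw [cbDeriv, Set.mem_setOf_eq, accPt_iff_nhds] at ht
  have hU : Set.Ioo u v \ ((B ∩ Set.Ioo u v) \ {t}) ∈ 𝓝 t := by
    refine Filter.inter_mem (isOpen_Ioo.mem_nhds htuv) ?_
    refine ((h.subset Set.diff_subset).isClosed.isOpen_compl).mem_nhds ?_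
    simp
  obtain ⟨y, ⟨⟨hy1, hy2⟩, hyB⟩, hyne⟩ := ht _ hU
  exact hy2 ⟨⟨hyB, hy1⟩, hyne⟩

lemma aux_accPt_iff_closure {X : Type*} [TopologicalSpace X] {z : X} {C : Set X} :
    AccPt z (Filter.principal C) ↔ z ∈ closure (C \ {z}) := by
  rw [mem_closure_iff_nhdsWithin_neBot, AccPt]
  have h : C \ {z} = {z}ᶜ ∩ C := by rw [Set.diff_eq, Set.inter_comm]
  rw [h, nhdsWithin_inter']

lemma aux_mem_closure_pairs (S : Set (unitI × unitI)) (p : unitI × unitI)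
    (hne : (↑p.1 : ℝ) ≠ (↑p.2 : ℝ))
    (h : ∀ x' y' : ℝ, min (↑p.1 : ℝ) (↑p.2 : ℝ) < x' → x' < y' →
        y' < max (↑p.1 : ℝ) (↑p.2 : ℝ) →
      ∀ q : unitI × unitI, ((↑q.1 : ℝ) = x' ∧ (↑q.2 : ℝ) = y') ∨
        ((↑q.1 : ℝ) = y' ∧ (↑q.2 : ℝ) = x') → q ∈ S) :
    p ∈ closure S := by
  rw [mem_closure_iff_nhds]
  intro U hU
  rw [Metric.mem_nhds_iff] at hU
  obtain ⟨ε, hε, hball⟩ := hU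
  set u := min (↑p.1 : ℝ) (↑p.2 : ℝ) with hu
  set v := max (↑p.1 : ℝ) (↑p.2 : ℝ) with hv
  have huv : u < v := min_lt_max.2 hne
  set δ := min (ε / 2) ((v - u) / 4) with hδ
  have hδpos : 0 < δ := lt_min (by linarith) (by linarith)
  have hδ4 : δ ≤ (v - u) / 4 := min_le_right _ _
  have hδε : δ ≤ ε / 2 := min_le_left _ _
  have hu0 : (0 : ℝ) ≤ u := le_min p.1.2.1 p.2.2.1
  have hv1 : v ≤ 1 := max_le p.1.2.2 p.2.2.2
  have h1 : u + δ ∈ Set.Icc (0 : ℝ) 1 := ⟨by linarith, by linarith⟩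
  have h2 : v - δ ∈ Set.Icc (0 : ℝ) 1 := ⟨by linarith, by linarith⟩
  have hlt : u + δ < v - δ := by linarith
  have hda : |u + δ - u| < ε := by
    rw [show u + δ - u = δ by ring, abs_of_pos hδpos]; linarith
  have hdb : |v - δ - v| < ε := by
    rw [show v - δ - v = -δ by ring, abs_neg, abs_of_pos hδpos]; linarith
  rcases le_or_gt (↑p.1 : ℝ) (↑p.2 : ℝ) with hc | hc
  · have hup : u = (↑p.1 : ℝ) := min_eq_left hc
    have hvp : v = (↑p.2 : ℝ) := max_eq_right hc
    refine ⟨(⟨u + δ, h1⟩, ⟨v - δ, h2⟩), hball ?_, ?_⟩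
    · rw [Metric.mem_ball, Prod.dist_eq]
      refine max_lt ?_ ?_ <;> rw [Subtype.dist_eq, Real.dist_eq]
      · rw [← hup]; exact hda
      · rw [← hvp]; exact hdb
    · exact h (u + δ) (v - δ) (by linarith) hlt (by linarith) _ (Or.inl ⟨rfl, rfl⟩)
  · have hup : u = (↑p.2 : ℝ) := min_eq_right hc.le
    have hvp : v = (↑p.1 : ℝ) := max_eq_left hc.le
    refine ⟨(⟨v - δ, h2⟩, ⟨u + δ, h1⟩), hball ?_, ?_⟩
    · rw [Metric.mem_ball, Prod.dist_eq]
      refine max_lt ?_ ?_ <;> rw [Subtype.dist_eq, Real.dist_eq]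
      · rw [← hvp]; exact hdb
      · rw [← hup]; exact hda
    · exact h (u + δ) (v - δ) (by linarith) hlt (by linarith) _ (Or.inr ⟨rfl, rfl⟩)

lemma aux_step {B : Set ℝ} (hBc : IsClosed B) :
    GammaStep (myR B) = myR (cbDeriv B) := by
  apply le_antisymm
  · refine closure_minimal (Set.union_subset ?_ (aux_diag_sub _)) (aux_myR_closed _)
    intro p hp
    have hfin : (B ∩ Set.uIoo (↑p.1 : ℝ) (↑p.2 : ℝ)).Finite := aux_plus_sub B hp
    show cbDeriv B ∩ Set.uIoo (↑p.1 : ℝ) (↑p.2 : ℝ) = ∅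
    rw [← Set.Ioo_min_max] at hfin ⊢
    exact aux_cb_empty_of_finite_inter hfin
  · intro p hp
    by_cases hne : (↑p.1 : ℝ) = (↑p.2 : ℝ)
    · exact subset_closure (Or.inr (show p.1 = p.2 from Subtype.ext hne))
    · refine aux_mem_closure_pairs _ _ hne ?_
      intro x' y' hx' hxy hy' q hq
      have hfin : (B ∩ Set.Icc x' y').Finite := by
        by_contra hinf
        have hinf' : (B ∩ Set.Icc x' y').Infinite := hinf
        obtain ⟨z, hzK, hzacc⟩ := hinf'.exists_accPt_of_subset_isCompact
            (isCompact_Icc.inter_left hBc) Subset.rfl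
        have hzB : z ∈ cbDeriv B := hzacc.mono (Filter.principal_mono.2 Set.inter_subset_left)
        have hz2 : z ∈ Set.uIoo (↑p.1 : ℝ) (↑p.2 : ℝ) := by
          rw [← Set.Ioo_min_max]
          exact ⟨lt_of_lt_of_le hx' hzK.2.1, lt_of_le_of_lt hzK.2.2 hy'⟩
        exact (mem_myR.1 hp) z hzB hz2
      have hq2 : (B ∩ Set.uIoo (↑q.1 : ℝ) (↑q.2 : ℝ)).Finite := by
        refine hfin.subset ?_
        rcases hq with ⟨hq1, hq2⟩ | ⟨hq1, hq2⟩
        · rw [hq1, hq2, Set.uIoo_of_lt hxy]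
          exact Set.inter_subset_inter_right _ Set.Ioo_subset_Icc_self
        · rw [hq1, hq2, Set.uIoo_of_gt hxy]
          exact Set.inter_subset_inter_right _ Set.Ioo_subset_Icc_self
      exact Set.mem_union_left _ (aux_plus_sup B hq2)

def sqSet (B : Set ℝ) : Set (unitI × unitI) :=
  (⋃ (a : ℝ) (b : ℝ) (_ : IsContig B a b), (subIcc a b) ×ˢ (subIcc a b)) ∪ Set.diagonal unitI

lemma aux_sq_eq {B : Set ℝ} (hBc : IsClosed B) (hB1 : B ⊆ Set.Icc 0 1) :
    sqSet B = myR B := by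
  apply le_antisymm
  · rintro p (hp | hp)
    · simp only [Set.mem_iUnion] at hp
      obtain ⟨a, b, hcontig, hp1, hp2⟩ := hp
      rw [mem_myR]
      intro t htB htu
      rw [aux_mem_uIoo] at htu
      have ha1 : a ≤ (↑p.1 : ℝ) := hp1.1
      have ha2 : (↑p.1 : ℝ) ≤ b := hp1.2
      have hb1 : a ≤ (↑p.2 : ℝ) := hp2.1
      have hb2 : (↑p.2 : ℝ) ≤ b := hp2.2
      have : t ∈ Set.Ioo a b ∩ B := by
        rcases htu with ⟨h1, h2⟩ | ⟨h1, h2⟩ <;> exact ⟨⟨by linarith, by linarith⟩, htB⟩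
      rw [hcontig.2.2.1] at this
      exact this
    · exact aux_diag_sub B hp
  · intro p hp
    by_cases hne : (↑p.1 : ℝ) = (↑p.2 : ℝ)
    · exact Or.inr (show p.1 = p.2 from Subtype.ext hne)
    · set u := min (↑p.1 : ℝ) (↑p.2 : ℝ) with hu
      set v := max (↑p.1 : ℝ) (↑p.2 : ℝ) with hv
      have huv : u < v := min_lt_max.2 hne
      have hu0 : (0 : ℝ) ≤ u := le_min p.1.2.1 p.2.2.1
      have hv1 : v ≤ 1 := max_le p.1.2.2 p.2.2.2
      set Sa : Set ℝ := insert 0 (B ∩ Set.Icc 0 u) with hSa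
      set Sb : Set ℝ := insert 1 (B ∩ Set.Icc v 1) with hSb
      have hSane : Sa.Nonempty := ⟨0, Set.mem_insert _ _⟩
      have hSbne : Sb.Nonempty := ⟨1, Set.mem_insert _ _⟩
      have hSabdd : BddAbove Sa := ⟨u, by
        rintro z (rfl | ⟨_, _, hz2⟩)
        · exact hu0
        · exact hz2⟩
      have hSbbdd : BddBelow Sb := ⟨v, by
        rintro z (rfl | ⟨_, hz1, _⟩)
        · exact hv1
        · exact hz1⟩
      have hSacl : IsClosed Sa := by
        rw [hSa, Set.insert_eq]
        exact isClosed_singleton.union (hBc.inter isClosed_Icc)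
      have hSbcl : IsClosed Sb := by
        rw [hSb, Set.insert_eq]
        exact isClosed_singleton.union (hBc.inter isClosed_Icc)
      set a := sSup Sa with ha
      set b := sInf Sb with hb
      have haSa : a ∈ Sa := hSacl.csSup_mem hSane hSabdd
      have hbSb : b ∈ Sb := hSbcl.csInf_mem hSbne hSbbdd
      have hau : a ≤ u := csSup_le hSane (by
        rintro z (rfl | ⟨_, _, hz2⟩)
        · exact hu0
        · exact hz2)
      have hvb : v ≤ b := le_csInf hSbne (by
        rintro z (rfl | ⟨_, hz1, _⟩)
        · exact hv1
        · exact hz1)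
      have ha0 : (0 : ℝ) ≤ a := le_csSup hSabdd (Set.mem_insert _ _)
      have hb1' : b ≤ 1 := csInf_le hSbbdd (Set.mem_insert _ _)
      have hcontig : IsContig B a b := by
        refine ⟨by linarith, Set.Icc_subset_Icc ha0 hb1', ?_, ?_, ?_⟩
        · ext t
          simp only [Set.mem_inter_iff, Set.mem_Ioo, Set.mem_empty_iff_false, iff_false, not_and]
          rintro ⟨hta, htb⟩ htB
          rcases le_or_gt t u with htu | htu
          · have : t ∈ Sa := Set.mem_insert_of_mem _ ⟨htB, (hB1 htB).1, htu⟩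
            exact absurd (le_csSup hSabdd this) (not_le.2 hta)
          · rcases le_or_gt v t with hvt | hvt
            · have : t ∈ Sb := Set.mem_insert_of_mem _ ⟨htB, hvt, (hB1 htB).2⟩
              exact absurd (csInf_le hSbbdd this) (not_le.2 htb)
            · refine (mem_myR.1 hp) t htB ?_
              rw [← Set.Ioo_min_max]
              exact ⟨htu, hvt⟩
        · rcases haSa with h | h
          · exact Or.inr h
          · exact Or.inl h.1
        · rcases hbSb with h | h
          · exact Or.inr h
          · exact Or.inl h.1
      refine Or.inl ?_
      simp only [Set.mem_iUnion]
      refine ⟨a, b, hcontig, ?_, ?_⟩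
      · exact ⟨le_trans hau (min_le_left _ _), le_trans (le_max_left _ _) hvb⟩
      · exact ⟨le_trans hau (min_le_right _ _), le_trans (le_max_right _ _) hvb⟩

lemma aux_limit {ι : Type*} [Nonempty ι] [LinearOrder ι] (Bf : ι → Set ℝ)
    (hanti : Antitone Bf) (hc : ∀ i, IsCompact (Bf i)) :
    myR (⋂ i, Bf i) = closure (⋃ i, myR (Bf i)) := by
  apply le_antisymm
  · intro p hp
    by_cases hne : (↑p.1 : ℝ) = (↑p.2 : ℝ)
    · refine subset_closure ?_
      exact Set.mem_iUnion.2 ⟨Classical.arbitrary ι, aux_diag_sub _ (show p.1 = p.2 from Subtype.ext hne)⟩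
    · refine aux_mem_closure_pairs _ _ hne ?_
      intro x' y' hx' hxy hy' q hq
      have hKey : ∃ i, Bf i ∩ Set.Icc x' y' = ∅ := by
        by_contra hcon
        push_neg at hcon
        have hdir : Directed (· ⊇ ·) (fun i => Bf i ∩ Set.Icc x' y') := by
          refine Antitone.directed_ge fun i j hij => ?_
          exact Set.inter_subset_inter_left _ (hanti hij)
        have hne' : ∀ i, (Bf i ∩ Set.Icc x' y').Nonempty := hcon
        have hnonempty := IsCompact.nonempty_iInter_of_directed_nonempty_isCompact_isClosed
          (fun i => Bf i ∩ Set.Icc x' y') hdir hne'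
          (fun i => (hc i).inter_right isClosed_Icc)
          (fun i => ((hc i).inter_right isClosed_Icc).isClosed)
        obtain ⟨z, hz⟩ := hnonempty
        rw [Set.mem_iInter] at hz
        have hz1 : z ∈ (⋂ i, Bf i) := Set.mem_iInter.2 fun i => (hz i).1
        have hz2 : z ∈ Set.Icc x' y' := (hz (Classical.arbitrary ι)).2
        refine (mem_myR.1 hp) z hz1 ?_
        rw [← Set.Ioo_min_max]
        exact ⟨lt_of_lt_of_le hx' hz2.1, lt_of_le_of_lt hz2.2 hy'⟩
      obtain ⟨i, hi⟩ := hKey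
      refine Set.mem_iUnion.2 ⟨i, ?_⟩
      rw [mem_myR]
      intro t htB htu
      have htIcc : t ∈ Set.Icc x' y' := by
        rcases hq with ⟨hq1, hq2⟩ | ⟨hq1, hq2⟩
        · rw [hq1, hq2, Set.uIoo_of_lt hxy] at htu
          exact Set.Ioo_subset_Icc_self htu
        · rw [hq1, hq2, Set.uIoo_of_gt hxy] at htu
          exact Set.Ioo_subset_Icc_self htu
      exact (Set.eq_empty_iff_forall_notMem.1 hi) t ⟨htB, htIcc⟩
  · refine closure_minimal (Set.iUnion_subset fun i => ?_) (aux_myR_closed _)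
    exact aux_myR_anti (Set.iInter_subset _ i)

lemma aux_image_cbDeriv (S : Set unitI) :
    Subtype.val '' cbDeriv S = cbDeriv (Subtype.val '' S) := by
  have hemb : Topology.IsClosedEmbedding ((↑) : unitI → ℝ) :=
    Topology.IsClosedEmbedding.subtypeVal (isClosed_Icc (a := (0:ℝ)) (b := 1))
  ext x
  constructor
  · rintro ⟨y, hy, rfl⟩
    rw [cbDeriv, Set.mem_setOf_eq, aux_accPt_iff_closure] at hy ⊢
    have himg : (Subtype.val '' S) \ {(y : ℝ)} = Subtype.val '' (S \ {y}) := by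
      rw [Set.image_diff Subtype.val_injective, Set.image_singleton]
    rw [himg, hemb.closure_image_eq]
    exact Set.mem_image_of_mem _ hy
  · intro hx
    rw [cbDeriv, Set.mem_setOf_eq, aux_accPt_iff_closure] at hx
    have hxIcc : x ∈ Set.Icc (0 : ℝ) 1 := by
      have h1 : closure ((Subtype.val '' S) \ {x}) ⊆ Set.Icc 0 1 := by
        refine closure_minimal ?_ isClosed_Icc
        exact fun z hz => by
          obtain ⟨w, _, rfl⟩ := hz.1
          exact w.2
      exact h1 hx
    refine ⟨⟨x, hxIcc⟩, ?_, rfl⟩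
    rw [cbDeriv, Set.mem_setOf_eq, aux_accPt_iff_closure]
    have himg : (Subtype.val '' S) \ {x} = Subtype.val '' (S \ {⟨x, hxIcc⟩}) := by
      rw [Set.image_diff Subtype.val_injective, Set.image_singleton]
    rw [himg, hemb.closure_image_eq] at hx
    exact (Subtype.val_injective.mem_set_image).1 hx

lemma GammaIter_zero {X : Type*} [TopologicalSpace X] (E : Set (X × X)) :
    GammaIter E 0 = E :=
  Ordinal.limitRecOn_zero _ _ _

lemma GammaIter_succ {X : Type*} [TopologicalSpace X] (E : Set (X × X)) (o : Ordinal.{0}) :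
    GammaIter E (o + 1) = GammaStep (GammaIter E o) := by
  rw [show (o + 1 : Ordinal.{0}) = Order.succ o from Ordinal.add_one_eq_succ o]
  exact Ordinal.limitRecOn_succ _ _ _ _

lemma GammaIter_limit {X : Type*} [TopologicalSpace X] (E : Set (X × X)) {o : Ordinal.{0}}
    (h : Order.IsSuccLimit o) :
    GammaIter E o = closure (⋃ b : {b : Ordinal // b < o}, GammaIter E b.1) :=
  Ordinal.limitRecOn_limit _ _ _ _ h

lemma CBIter_zero {X : Type*} [TopologicalSpace X] (A : Set X) : CBIter A 0 = A :=
  Ordinal.limitRecOn_zero _ _ _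

lemma CBIter_succ {X : Type*} [TopologicalSpace X] (A : Set X) (o : Ordinal.{0}) :
    CBIter A (o + 1) = cbDeriv (CBIter A o) := by
  rw [show (o + 1 : Ordinal.{0}) = Order.succ o from Ordinal.add_one_eq_succ o]
  exact Ordinal.limitRecOn_succ _ _ _ _

lemma CBIter_limit {X : Type*} [TopologicalSpace X] (A : Set X) {o : Ordinal.{0}}
    (h : Order.IsSuccLimit o) :
    CBIter A o = ⋂ b : {b : Ordinal // b < o}, CBIter A b.1 :=
  Ordinal.limitRecOn_limit _ _ _ _ h

lemma CBIter_closed {X : Type*} [TopologicalSpace X] [T1Space X] {A : Set X} (hA : IsClosed A) :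
    ∀ o : Ordinal.{0}, IsClosed (CBIter A o) := by
  intro o
  induction o using Ordinal.limitRecOn with
  | zero => rwa [CBIter_zero]
  | add_one o ih => rw [CBIter_succ]; exact aux_isClosed_cbDeriv _
  | limit o ho ih =>
    rw [CBIter_limit _ ho]
    exact isClosed_iInter fun b => ih b.1 b.2

lemma CBIter_anti {X : Type*} [TopologicalSpace X] [T1Space X] {A : Set X} (hA : IsClosed A) :
    ∀ o₂ o₁ : Ordinal.{0}, o₁ ≤ o₂ → CBIter A o₂ ⊆ CBIter A o₁ := by
  intro o₂
  induction o₂ using Ordinal.limitRecOn with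
  | zero => intro o₁ h; rw [nonpos_iff_eq_zero.1 h]
  | add_one o ih =>
    intro o₁ h
    rcases eq_or_lt_of_le h with rfl | hlt
    · rfl
    · have h1 : o₁ ≤ o := Order.lt_add_one_iff.1 hlt
      refine subset_trans ?_ (ih o₁ h1)
      rw [CBIter_succ]
      exact aux_cbDeriv_subset (CBIter_closed hA o)
  | limit o ho ih =>
    intro o₁ h
    rcases eq_or_lt_of_le h with rfl | hlt
    · rfl
    · rw [CBIter_limit _ ho]
      exact Set.iInter_subset (fun b : {b : Ordinal // b < o} => CBIter A b.1) ⟨o₁, hlt⟩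

lemma aux_emb : Topology.IsClosedEmbedding ((↑) : unitI → ℝ) :=
  Topology.IsClosedEmbedding.subtypeVal (isClosed_Icc (a := (0:ℝ)) (b := 1))

lemma aux_img_closed {S : Set unitI} (hS : IsClosed S) : IsClosed (Subtype.val '' S) :=
  aux_emb.isClosedMap _ hS

lemma aux_img_sub (S : Set unitI) : Subtype.val '' S ⊆ Set.Icc 0 1 := by
  rintro x ⟨y, _, rfl⟩; exact y.2

lemma aux_img_compact {S : Set unitI} (hS : IsClosed S) : IsCompact (Subtype.val '' S) :=
  IsCompact.of_isClosed_subset isCompact_Icc (aux_img_closed hS) (aux_img_sub S)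

lemma main_iter (A : Set unitI) (hA : IsClosed A) (E : Set (unitI × unitI))
    (hE0 : E = myR (Subtype.val '' A)) :
    ∀ α : Ordinal.{0}, GammaIter E α = myR (Subtype.val '' CBIter A α) := by
  intro α
  induction α using Ordinal.limitRecOn with
  | zero => rw [GammaIter_zero, CBIter_zero, hE0]
  | add_one o ih =>
    rw [GammaIter_succ, CBIter_succ, ih,
      aux_step (aux_img_closed (CBIter_closed hA o)), aux_image_cbDeriv]
  | limit o ho ih =>
    rw [GammaIter_limit _ ho, CBIter_limit _ ho]
    have hne : Nonempty {b : Ordinal.{0} // b < o} := ⟨⟨0, ho.pos⟩⟩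
    have himg : Subtype.val '' (⋂ b : {b : Ordinal // b < o}, CBIter A b.1) =
        ⋂ b : {b : Ordinal // b < o}, Subtype.val '' CBIter A b.1 :=
      Set.InjOn.image_iInter_eq (Subtype.val_injective.injOn)
    rw [himg]
    have hanti : Antitone fun b : {b : Ordinal // b < o} => Subtype.val '' CBIter A b.1 := by
      intro b₁ b₂ h
      exact Set.image_mono (CBIter_anti hA b₂.1 b₁.1 (Subtype.coe_le_coe.2 h))
    have hU : (⋃ b : {b : Ordinal.{0} // b < o}, GammaIter E b.1) =
        ⋃ b : {b : Ordinal.{0} // b < o}, myR (Subtype.val '' CBIter A b.1) :=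
      Set.iUnion_congr fun b => ih b.1 b.2
    rw [hU, ← aux_limit _ hanti (fun b => aux_img_compact (CBIter_closed hA b.1))]

lemma aux_myR_empty : myR ∅ = Set.univ := by
  ext p; simp [myR]

lemma aux_countable_empty (A : Set unitI) (hA : IsClosed A) (hcount : A.Countable) :
    ∃ β : Ordinal.{0}, β.card ≤ Cardinal.aleph0 ∧ CBIter A β = ∅ := by
  set ω1 : Ordinal.{0} := (Cardinal.aleph 1).ord with hω1
  have claim1 : ∃ β : Ordinal.{0}, β < ω1 ∧ CBIter A β = CBIter A (β + 1) := by
    by_contra hcon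
    push_neg at hcon
    have key : ∀ t : ω1.ToType, ∃ v ∈ TopologicalSpace.countableBasis unitI, ∃ x : unitI,
        x ∈ v ∧ x ∈ CBIter A ((Ordinal.ToType.mk (o := ω1)).symm t : Set.Iio ω1).1 ∧
        x ∉ CBIter A (((Ordinal.ToType.mk (o := ω1)).symm t : Set.Iio ω1).1 + 1) ∧
        ∀ y ∈ v ∩ CBIter A ((Ordinal.ToType.mk (o := ω1)).symm t : Set.Iio ω1).1, y = x := by
      intro t
      set β := ((Ordinal.ToType.mk (o := ω1)).symm t : Set.Iio ω1).1 with hβ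
      have hβlt : β < ω1 := ((Ordinal.ToType.mk (o := ω1)).symm t).2
      have hssub : CBIter A (β + 1) ⊂ CBIter A β := by
        rw [CBIter_succ]
        refine HasSubset.Subset.ssubset_of_ne (aux_cbDeriv_subset (CBIter_closed hA β)) ?_
        intro h
        exact hcon β hβlt (by rw [CBIter_succ]; exact h.symm)
      obtain ⟨x, hx1, hx2⟩ := Set.exists_of_ssubset hssub
      have hx2' : ¬ AccPt x (Filter.principal (CBIter A β)) := by
        intro h
        exact hx2 (by rw [CBIter_succ]; exact h)
      rw [accPt_iff_nhds] at hx2'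
      push_neg at hx2'
      obtain ⟨U, hU, hU2⟩ := hx2'
      obtain ⟨O, hOU, hOopen, hxO⟩ := mem_nhds_iff.1 hU
      obtain ⟨v, hv, hxv, hvO⟩ :=
        (TopologicalSpace.isBasis_countableBasis unitI).exists_subset_of_mem_open hxO hOopen
      exact ⟨v, hv, x, hxv, hx1, hx2, fun y hy => hU2 y ⟨hOU (hvO hy.1), hy.2⟩⟩
    choose V hV x hxV hxC hxN hVsub using key
    have hinj : Function.Injective
        (fun t : ω1.ToType => (⟨V t, hV t⟩ : ↥(TopologicalSpace.countableBasis unitI))) := by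
      intro t₁ t₂ hg
      simp only [Subtype.mk_eq_mk] at hg
      set β₁ := ((Ordinal.ToType.mk (o := ω1)).symm t₁ : Set.Iio ω1) with hb1
      set β₂ := ((Ordinal.ToType.mk (o := ω1)).symm t₂ : Set.Iio ω1) with hb2
      have main : ∀ s₁ s₂ : ω1.ToType, V s₁ = V s₂ →
          ((Ordinal.ToType.mk (o := ω1)).symm s₁ : Set.Iio ω1).1 <
            ((Ordinal.ToType.mk (o := ω1)).symm s₂ : Set.Iio ω1).1 → False := by
        intro s₁ s₂ hVeq hlt
        set γ₁ := ((Ordinal.ToType.mk (o := ω1)).symm s₁ : Set.Iio ω1).1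
        set γ₂ := ((Ordinal.ToType.mk (o := ω1)).symm s₂ : Set.Iio ω1).1
        have hsub : CBIter A γ₂ ⊆ CBIter A (γ₁ + 1) := by
          refine CBIter_anti hA γ₂ (γ₁ + 1) ?_
          rw [Ordinal.add_one_eq_succ]
          exact Order.succ_le_of_lt hlt
        have hx2in : x s₂ ∈ CBIter A γ₁ :=
          CBIter_anti hA (γ₁ + 1) γ₁ (le_of_lt (by
            rw [Ordinal.add_one_eq_succ]; exact Order.lt_succ _)) (hsub (hxC s₂))
        have heq : x s₂ = x s₁ := hVsub s₁ (x s₂) ⟨by rw [hVeq]; exact hxV s₂, hx2in⟩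
        exact hxN s₁ (heq ▸ hsub (hxC s₂))
      rcases lt_trichotomy (β₁ : Ordinal) (β₂ : Ordinal) with hlt | heq | hlt
      · exact absurd hg (fun h => main t₁ t₂ h hlt)
      · have : β₁ = β₂ := Subtype.ext heq
        have h2 : (Ordinal.ToType.mk (o := ω1)).symm t₁ = (Ordinal.ToType.mk (o := ω1)).symm t₂ := this
        exact (Ordinal.ToType.mk (o := ω1)).symm.injective h2
      · exact absurd hg.symm (fun h => main t₂ t₁ h hlt)
    have hcard1 : Cardinal.mk ω1.ToType ≤ Cardinal.aleph0 := by
      haveI := (TopologicalSpace.countable_countableBasis unitI).to_subtype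
      exact le_trans (Cardinal.mk_le_of_injective hinj) Cardinal.mk_le_aleph0
    rw [Cardinal.mk_toType, hω1, Cardinal.card_ord] at hcard1
    exact absurd hcard1 (not_le.2 Cardinal.aleph0_lt_aleph_one)
  obtain ⟨β, hβlt, hβfix⟩ := claim1
  have hβcard : β.card ≤ Cardinal.aleph0 := by
    have h1 : β.card < Cardinal.aleph 1 := Cardinal.lt_ord.1 hβlt
    rw [← Cardinal.succ_aleph0] at h1
    exact Order.lt_succ_iff.1 h1
  refine ⟨β, hβcard, ?_⟩
  by_contra hne'
  have hnonempty : (CBIter A β).Nonempty := Set.nonempty_iff_ne_empty.2 hne'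
  rw [CBIter_succ] at hβfix
  have hperf : Perfect (CBIter A β) := by
    refine ⟨CBIter_closed hA β, fun z hz => ?_⟩
    have : z ∈ cbDeriv (CBIter A β) := hβfix ▸ hz
    exact this
  obtain ⟨F, hFrange, _, hFinj⟩ := hperf.exists_nat_bool_injection hnonempty
  have hsubA : CBIter A β ⊆ A := by
    have := CBIter_anti hA β 0 (zero_le (a := β))
    rwa [CBIter_zero] at this
  have hRcount : (Set.range F).Countable := (hcount.mono hsubA).mono hFrange
  haveI := hRcount.to_subtype
  haveI : Countable (ℕ → Bool) := Countable.of_equiv _ (Equiv.ofInjective F hFinj).symm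
  obtain ⟨s, hs⟩ := exists_surjective_nat (ℕ → Bool)
  obtain ⟨m, hm⟩ := hs fun n => !(s n n)
  simpa using congrFun hm m

/-- For `f = ψ(A)`, whose IE-pair set is `⋃_{J ∈ C(A)} (cl J)² ∪ Δ`, one has for every
countable ordinal `α` that `Γ^α(E(I, ψ(A))) = ⋃_{J ∈ C(A^α)} (cl J)² ∪ Δ`, where `A^α` is the
`α`-th Cantor–Bendixson derivative. Consequently, `ψ(A)` has CPE if and only if `A` is
countable. -/
theorem stmt10 (A : Set unitI) (hA : IsCompact A) (f : C(unitI, unitI))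
    (hE : {p : unitI × unitI | IEPair ⇑f p} =
      (⋃ (a : ℝ) (b : ℝ) (_ : IsContig (Subtype.val '' A) a b),
        (subIcc a b) ×ˢ (subIcc a b)) ∪ Set.diagonal unitI) :
    (∀ α : Ordinal.{0}, α.card ≤ Cardinal.aleph0 →
      GammaIter {p : unitI × unitI | IEPair ⇑f p} α =
        (⋃ (a : ℝ) (b : ℝ) (_ : IsContig (Subtype.val '' (CBIter A α)) a b),
          (subIcc a b) ×ˢ (subIcc a b)) ∪ Set.diagonal unitI) ∧
    ((∃ α : Ordinal.{0}, α.card ≤ Cardinal.aleph0 ∧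
        GammaIter {p : unitI × unitI | IEPair ⇑f p} α = Set.univ) ↔ A.Countable) := by
  have hAcl : IsClosed A := hA.isClosed
  have hE0 : {p : unitI × unitI | IEPair ⇑f p} = myR (Subtype.val '' A) := by
    rw [hE]
    exact aux_sq_eq (aux_img_closed hAcl) (aux_img_sub A)
  have hmain := main_iter A hAcl _ hE0
  constructor
  · intro α _
    rw [hmain α,
      ← aux_sq_eq (aux_img_closed (CBIter_closed hAcl α)) (aux_img_sub _)]
    rfl
  · constructor
    · rintro ⟨α, hcard, huniv⟩
      rw [hmain α] at huniv
      have h01 : Subtype.val '' CBIter A α ⊆ {0, 1} := by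
        intro t ht
        have hp : ((⟨0, by norm_num⟩, ⟨1, by norm_num⟩) : unitI × unitI) ∈
            myR (Subtype.val '' CBIter A α) := by
          rw [huniv]; trivial
        by_contra htne
        simp only [Set.mem_insert_iff, Set.mem_singleton_iff, not_or] at htne
        have htIcc : t ∈ Set.Icc (0:ℝ) 1 := aux_img_sub _ ht
        refine (mem_myR.1 hp) t ht ?_
        show t ∈ Set.uIoo (0:ℝ) 1
        rw [Set.uIoo_of_lt zero_lt_one]
        exact ⟨lt_of_le_of_ne htIcc.1 (Ne.symm htne.1), lt_of_le_of_ne htIcc.2 htne.2⟩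
      have hfin : (Subtype.val '' CBIter A α).Finite :=
        ((Set.finite_singleton (1:ℝ)).insert 0).subset h01
      have hcb : cbDeriv (Subtype.val '' CBIter A α) = ∅ := aux_cb_finite hfin
      have hempty : CBIter A (α + 1) = ∅ := by
        have himg : Subtype.val '' CBIter A (α + 1) = ∅ := by
          rw [CBIter_succ, aux_image_cbDeriv, hcb]
        exact Set.image_eq_empty.1 himg
      obtain ⟨V, D, hVc, hD, hAVD⟩ := exists_countable_union_perfect_of_isClosed hAcl
      have hDsub : ∀ β : Ordinal.{0}, D ⊆ CBIter A β := by
        intro β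
        induction β using Ordinal.limitRecOn with
        | zero => rw [CBIter_zero, hAVD]; exact Set.subset_union_right
        | add_one o ih =>
          rw [CBIter_succ]
          intro z hz
          exact (hD.acc z hz).mono (Filter.principal_mono.2 ih)
        | limit o ho ih =>
          rw [CBIter_limit _ ho]
          exact Set.subset_iInter fun b => ih b.1 b.2
      have hDempty : D = ∅ := Set.subset_empty_iff.1 (hempty ▸ hDsub (α + 1))
      rw [hAVD, hDempty, Set.union_empty]
      exact hVc
    · intro hcount
      obtain ⟨β, hc, hemp⟩ := aux_countable_empty A hAcl hcount
      exact ⟨β, hc, by rw [hmain β, hemp, Set.image_empty, aux_myR_empty]⟩
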